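/- The group GL_4(F_3) of invertible 4×4 matrices over the field with 3 elements contains no subgroup isomorphic to A_5 × V_4, the direct product of the alternating group on 5 letters with the Klein four-group. -/

import Mathlib

open Polynomial

noncomputable def qq : (ZMod 3)[X] := X^4 + X^3 + X^2 + X + 1

lemma qq_monic : qq.Monic := by
  unfold qq; monicity!

lemma qq_natDegree : qq.natDegree = 4 := by
  unfold qq; compute_degree!

lemma qq_no_root (x : ZMod 3) : qq.eval x ≠ 0 := by
  simp only [qq, eval_add, eval_pow, eval_X, eval_one]
  revert x; decide

lemma no_deg2_factor : ∀ p b : (ZMod 3)[X], p.Monic → b.Monic →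
    p.natDegree = 2 → b.natDegree = 2 → qq ≠ p * b := by
  intro p b hp hb hp2 hb2 h
  have hpe : p = C (p.coeff 0) + C (p.coeff 1) * X + X ^ 2 := by
    conv_lhs => rw [p.as_sum_range' 3 (by omega)]
    have : p.coeff 2 = 1 := by
      have := hp.leadingCoeff; rwa [leadingCoeff, hp2] at this
    simp [Finset.sum_range_succ, this, Polynomial.C_mul_X_pow_eq_monomial, ← Polynomial.C_mul_X_pow_eq_monomial, pow_one]
  have hbe : b = C (b.coeff 0) + C (b.coeff 1) * X + X ^ 2 := by
    conv_lhs => rw [b.as_sum_range' 3 (by omega)]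
    have : b.coeff 2 = 1 := by
      have := hb.leadingCoeff; rwa [leadingCoeff, hb2] at this
    simp [Finset.sum_range_succ, this, Polynomial.C_mul_X_pow_eq_monomial, ← Polynomial.C_mul_X_pow_eq_monomial, pow_one]
  have expand : (C (p.coeff 0) + C (p.coeff 1) * X + X ^ 2) * (C (b.coeff 0) + C (b.coeff 1) * X + X ^ 2)
      = C (p.coeff 0 * b.coeff 0) + C (p.coeff 0 * b.coeff 1 + p.coeff 1 * b.coeff 0) * X
        + C (p.coeff 0 + b.coeff 0 + p.coeff 1 * b.coeff 1) * X ^ 2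
        + C (p.coeff 1 + b.coeff 1) * X ^ 3 + X ^ 4 := by
    simp only [C_mul, C_add]; ring
  rw [hpe, hbe, expand] at h
  set p0 := p.coeff 0; set p1 := p.coeff 1; set b0 := b.coeff 0; set b1 := b.coeff 1
  have h0 := congrArg (fun r => r.coeff 0) h
  have h1 := congrArg (fun r => r.coeff 1) h
  have h2 := congrArg (fun r => r.coeff 2) h
  have h3 := congrArg (fun r => r.coeff 3) h
  simp only [qq, coeff_add, coeff_C_mul, coeff_X_pow, coeff_C, coeff_X, coeff_one,
    mul_one, mul_zero, add_zero, zero_add] at h0 h1 h2 h3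
  clear_value p0 p1 b0 b1
  revert h0 h1 h2 h3
  clear h hpe hbe expand
  revert p0 p1 b0 b1
  decide


lemma qq_ne_zero : qq ≠ 0 := qq_monic.ne_zero

lemma no_deg1_factor (p : (ZMod 3)[X]) (hm : p.Monic) (h1 : p.natDegree = 1)
    (hd : p ∣ qq) : False := by
  obtain ⟨t, ht⟩ := hd
  have hp := hm.eq_X_add_C h1
  have : qq.eval (-(p.coeff 0)) = 0 := by
    rw [ht, hp]; simp
  exact qq_no_root _ this

lemma no_deg2_factor' (p : (ZMod 3)[X]) (hm : p.Monic) (h2 : p.natDegree = 2)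
    (hd : p ∣ qq) : False := by
  obtain ⟨t, ht⟩ := hd
  have htm : t.Monic := hm.of_mul_monic_left (ht ▸ qq_monic)
  have hpz : p ≠ 0 := hm.ne_zero
  have htz : t ≠ 0 := htm.ne_zero
  have hdeg : p.natDegree + t.natDegree = 4 := by
    rw [← Polynomial.natDegree_mul hpz htz, ← ht, qq_natDegree]
  exact no_deg2_factor p t hm htm h2 (by omega) ht

lemma monic_factor_elim (a : (ZMod 3)[X]) (ha : a ≠ 0) (hd : a ∣ qq)
    (h1 : a.natDegree = 1 ∨ a.natDegree = 2) : False := by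
  have hm : (a * C a.leadingCoeff⁻¹).Monic := Polynomial.monic_mul_leadingCoeff_inv ha
  have hnd : (a * C a.leadingCoeff⁻¹).natDegree = a.natDegree := by
    rw [Polynomial.natDegree_mul ha (by simp [Polynomial.leadingCoeff_ne_zero.mpr ha]),
      Polynomial.natDegree_C, add_zero]
  have hdd : (a * C a.leadingCoeff⁻¹) ∣ qq := by
    obtain ⟨t, ht⟩ := hd
    refine ⟨C a.leadingCoeff * t, ?_⟩
    have : (C a.leadingCoeff⁻¹ : (ZMod 3)[X]) * C a.leadingCoeff = 1 := by
      rw [← C_mul, inv_mul_cancel₀ (Polynomial.leadingCoeff_ne_zero.mpr ha), C_1]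
    calc qq = a * t := ht
      _ = a * (C a.leadingCoeff⁻¹ * C a.leadingCoeff) * t := by rw [this, mul_one]
      _ = a * C a.leadingCoeff⁻¹ * (C a.leadingCoeff * t) := by ring
  rcases h1 with h | h
  · exact no_deg1_factor _ hm (hnd.trans h) hdd
  · exact no_deg2_factor' _ hm (hnd.trans h) hdd

lemma qq_irred : Irreducible qq := by
  constructor
  · intro hu
    have := Polynomial.natDegree_eq_zero_of_isUnit hu
    rw [qq_natDegree] at this; omega
  · intro a b hab
    by_contra hcon
    push_neg at hcon
    obtain ⟨hua, hub⟩ := hcon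
    have ha : a ≠ 0 := by rintro rfl; exact qq_ne_zero (by rw [hab, zero_mul])
    have hb : b ≠ 0 := by rintro rfl; exact qq_ne_zero (by rw [hab, mul_zero])
    have hdeg : a.natDegree + b.natDegree = 4 := by
      rw [← Polynomial.natDegree_mul ha hb, ← hab, qq_natDegree]
    have hda : 1 ≤ a.natDegree := by
      by_contra h
      exact hua (Polynomial.isUnit_iff_degree_eq_zero.mpr
        (by rw [Polynomial.degree_eq_natDegree ha]; norm_cast; omega))
    have hdb : 1 ≤ b.natDegree := by
      by_contra h
      exact hub (Polynomial.isUnit_iff_degree_eq_zero.mpr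
        (by rw [Polynomial.degree_eq_natDegree hb]; norm_cast; omega))
    rcases Nat.lt_or_ge a.natDegree 3 with h | h
    · exact monic_factor_elim a ha (Dvd.intro _ hab.symm) (by omega)
    · exact monic_factor_elim b hb (Dvd.intro_left _ hab.symm) (by omega)

abbrev MM := Matrix (Fin 4) (Fin 4) (ZMod 3)

noncomputable def pol (c : Fin 4 → ZMod 3) : (ZMod 3)[X] :=
  C (c 0) + C (c 1) * X + C (c 2) * X ^ 2 + C (c 3) * X ^ 3

lemma pol_coeff (c : Fin 4 → ZMod 3) (i : Fin 4) : (pol c).coeff i.val = c i := by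
  fin_cases i <;>
    simp [pol, Polynomial.coeff_add, Polynomial.coeff_C, Polynomial.coeff_C_mul,
      Polynomial.coeff_X_pow, Polynomial.coeff_X]

lemma pol_natDegree_le (c : Fin 4 → ZMod 3) : (pol c).natDegree ≤ 3 := by
  unfold pol; compute_degree

lemma pol_sub (c c' : Fin 4 → ZMod 3) : pol (c - c') = pol c - pol c' := by
  simp only [pol, Pi.sub_apply, map_sub]; ring

lemma matrix_eq_of_mulVec {A B : MM} (h : ∀ v, A.mulVec v = B.mulVec v) : A = B := by
  ext i j
  have := congrFun (h (Pi.single j 1)) i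
  simpa using this

lemma aeval_small (m : (ZMod 3)[X]) (hm : m.natDegree < 4) (A : MM) :
    Polynomial.aeval A m = Polynomial.aeval A (pol fun i => m.coeff i.val) := by
  conv_lhs => rw [m.as_sum_range' 4 hm]
  simp [pol, Finset.sum_range_succ, Polynomial.C_mul_X_pow_eq_monomial,
    ← Polynomial.C_mul_X_pow_eq_monomial, pow_one, map_add, map_mul, map_pow,
    show ((0 : Fin 4) : ℕ) = 0 from rfl, show ((1 : Fin 4) : ℕ) = 1 from rfl,
    show ((2 : Fin 4) : ℕ) = 2 from rfl, show ((3 : Fin 4) : ℕ) = 3 from rfl]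

-- injectivity of c ↦ (pol c)(A) * w for w a nonzero kernel vector of qq(A)
lemma F_inj (A : MM) (w : Fin 4 → ZMod 3) (hw : (Polynomial.aeval A qq).mulVec w = 0)
    (hw0 : w ≠ 0) :
    Function.Injective (fun c : Fin 4 → ZMod 3 => (Polynomial.aeval A (pol c)).mulVec w) := by
  intro c c' h
  by_contra hne
  set d := c - c' with hd
  have hd0 : d ≠ 0 := sub_ne_zero_of_ne hne
  have hpd : pol d ≠ 0 := by
    obtain ⟨i, hi⟩ := Function.ne_iff.mp hd0
    intro h0
    apply hi
    rw [← pol_coeff d i, h0, Polynomial.coeff_zero]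
    rfl
  have hmul : (Polynomial.aeval A (pol d)).mulVec w = 0 := by
    simp only at h
    rw [pol_sub, map_sub, Matrix.sub_mulVec, h, sub_self]
  have hndvd : ¬ qq ∣ pol d := by
    intro hdvd
    have := Polynomial.natDegree_le_of_dvd hdvd hpd
    rw [qq_natDegree] at this
    exact absurd (le_trans this (pol_natDegree_le d)) (by omega)
  obtain ⟨u, v, huv⟩ := (qq_irred.coprime_iff_not_dvd.mpr hndvd)
  have : w = 0 := by
    calc w = (Polynomial.aeval A (u * qq + v * pol d)).mulVec w := by rw [huv]; simp
    _ = (Polynomial.aeval A u).mulVec ((Polynomial.aeval A qq).mulVec w)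
        + (Polynomial.aeval A v).mulVec ((Polynomial.aeval A (pol d)).mulVec w) := by
        rw [map_add, map_mul, map_mul, Matrix.add_mulVec, Matrix.mulVec_mulVec,
          Matrix.mulVec_mulVec]
    _ = 0 := by rw [hw, hmul]; simp
  exact hw0 this

lemma F_surj (A : MM) (w : Fin 4 → ZMod 3) (hw : (Polynomial.aeval A qq).mulVec w = 0)
    (hw0 : w ≠ 0) :
    Function.Surjective (fun c : Fin 4 → ZMod 3 => (Polynomial.aeval A (pol c)).mulVec w) :=
  Finite.surjective_of_injective (F_inj A w hw hw0)

lemma aeval_qq_eq (A : MM) : Polynomial.aeval A qq = A ^ 4 + A ^ 3 + A ^ 2 + A + 1 := by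
  simp [qq, map_add, map_pow, Polynomial.aeval_X, map_one]

lemma step1 (A : MM) (h5 : A ^ 5 = 1) (h1 : A ≠ 1) : Polynomial.aeval A qq = 0 := by
  have hfact : (A - 1) * Polynomial.aeval A qq = 0 := by
    rw [aeval_qq_eq]
    have : (A - 1) * (A ^ 4 + A ^ 3 + A ^ 2 + A + 1) = A ^ 5 - 1 := by noncomm_ring
    rw [this, h5, sub_self]
  have hfact' : Polynomial.aeval A qq * (A - 1) = 0 := by
    rw [aeval_qq_eq]
    have : (A ^ 4 + A ^ 3 + A ^ 2 + A + 1) * (A - 1) = A ^ 5 - 1 := by noncomm_ring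
    rw [this, h5, sub_self]
  by_cases hker : ∀ v, (Polynomial.aeval A qq).mulVec v = 0 → v = 0
  · exfalso
    apply h1
    have : ∀ v, (A - 1).mulVec v = 0 := by
      intro v
      apply hker
      rw [Matrix.mulVec_mulVec, hfact', Matrix.zero_mulVec]
    have hA1 : A - 1 = (0 : MM) := matrix_eq_of_mulVec (by simpa using this)
    exact sub_eq_zero.mp hA1
  · push_neg at hker
    obtain ⟨w, hw, hw0⟩ := hker
    apply matrix_eq_of_mulVec
    intro v
    obtain ⟨c, hc⟩ := F_surj A w hw hw0 v
    simp only at hc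
    rw [Matrix.zero_mulVec, ← hc, Matrix.mulVec_mulVec, ← map_mul, mul_comm qq (pol c),
      map_mul, ← Matrix.mulVec_mulVec, hw, Matrix.mulVec_zero]

lemma dvd_of_aeval_zero (A : MM) (h5 : A ^ 5 = 1) (h1 : A ≠ 1) (r : (ZMod 3)[X])
    (hr : Polynomial.aeval A r = 0) : qq ∣ r := by
  have hq0 : Polynomial.aeval A qq = 0 := step1 A h5 h1
  rw [← Polynomial.modByMonic_eq_zero_iff_dvd qq_monic]
  set m := r %ₘ qq with hm
  by_contra hm0
  have hdeg : m.natDegree < 4 := by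
    have := Polynomial.degree_modByMonic_lt r qq_monic
    rw [← hm, Polynomial.degree_eq_natDegree hm0,
      Polynomial.degree_eq_natDegree qq_ne_zero, qq_natDegree] at this
    exact_mod_cast this
  have haevm : Polynomial.aeval A m = 0 := by
    have := Polynomial.modByMonic_add_div r qq
    have h2 : Polynomial.aeval A (m + qq * (r /ₘ qq)) = 0 := by rw [this]; exact hr
    rw [map_add, map_mul, hq0, zero_mul, add_zero] at h2
    exact h2
  have hc : (fun i : Fin 4 => m.coeff i.val) = 0 := by
    apply F_inj A (Pi.single 0 1) (by rw [hq0, Matrix.zero_mulVec])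
      (by intro h; have := congrFun h 0; simp at this)
    simp only
    rw [← aeval_small m hdeg A, haevm]
    have : pol (0 : Fin 4 → ZMod 3) = 0 := by simp [pol]
    rw [this, map_zero]
  apply hm0
  have : m = pol fun i : Fin 4 => m.coeff i.val := by
    conv_lhs => rw [m.as_sum_range' 4 hdeg]
    simp [pol, Finset.sum_range_succ, Polynomial.C_mul_X_pow_eq_monomial,
      ← Polynomial.C_mul_X_pow_eq_monomial, pow_one,
      show ((0 : Fin 4) : ℕ) = 0 from rfl, show ((1 : Fin 4) : ℕ) = 1 from rfl,
      show ((2 : Fin 4) : ℕ) = 2 from rfl, show ((3 : Fin 4) : ℕ) = 3 from rfl]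
  rw [this, hc]
  simp [pol]

lemma main_matrix (A Y : MM) (h5 : A ^ 5 = 1) (h1 : A ≠ 1) (hc : Y * A = A * Y)
    (hY : Y * Y = 1) : Y = 1 ∨ Y = -1 := by
  have hq0 : Polynomial.aeval A qq = 0 := step1 A h5 h1
  set v : Fin 4 → ZMod 3 := Pi.single 0 1 with hv
  have hv0 : v ≠ 0 := by intro h; have := congrFun h 0; simp [hv] at this
  have hker : (Polynomial.aeval A qq).mulVec v = 0 := by rw [hq0, Matrix.zero_mulVec]
  obtain ⟨c₀, hc₀⟩ := F_surj A v hker hv0 (Y.mulVec v)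
  simp only at hc₀
  have hYcomm : ∀ p : (ZMod 3)[X], Y * Polynomial.aeval A p = Polynomial.aeval A p * Y := by
    intro p
    induction p using Polynomial.induction_on' with
    | add f g hf hg => rw [map_add, mul_add, add_mul, hf, hg]
    | monomial n a =>
      rw [Polynomial.aeval_monomial]
      have h1 : Y * A ^ n = A ^ n * Y := (Commute.pow_right (show Commute Y A from hc) n).eq
      calc Y * ((algebraMap (ZMod 3) MM) a * A ^ n)
          = (algebraMap (ZMod 3) MM) a * (Y * A ^ n) := by
            rw [← mul_assoc, ← Algebra.commutes a Y, mul_assoc]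
        _ = (algebraMap (ZMod 3) MM) a * A ^ n * Y := by rw [h1, mul_assoc]
  have hYeq : Y = Polynomial.aeval A (pol c₀) := by
    apply matrix_eq_of_mulVec
    intro u
    obtain ⟨c, hcu⟩ := F_surj A v hker hv0 u
    simp only at hcu
    rw [← hcu]
    calc Y.mulVec ((Polynomial.aeval A (pol c)).mulVec v)
        = (Y * Polynomial.aeval A (pol c)).mulVec v := Matrix.mulVec_mulVec v _ _
      _ = (Polynomial.aeval A (pol c) * Y).mulVec v := by rw [hYcomm]
      _ = (Polynomial.aeval A (pol c)).mulVec (Y.mulVec v) := (Matrix.mulVec_mulVec v _ _).symm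
      _ = (Polynomial.aeval A (pol c)).mulVec ((Polynomial.aeval A (pol c₀)).mulVec v) := by
          rw [hc₀]
      _ = (Polynomial.aeval A (pol c * pol c₀)).mulVec v := by
          rw [map_mul, Matrix.mulVec_mulVec]
      _ = (Polynomial.aeval A (pol c₀)).mulVec ((Polynomial.aeval A (pol c)).mulVec v) := by
          rw [mul_comm (pol c) (pol c₀), map_mul, Matrix.mulVec_mulVec]
  have hsq : Polynomial.aeval A (pol c₀ * pol c₀ - 1) = 0 := by
    rw [map_sub, map_mul, map_one, ← hYeq, hY, sub_self]
  have hdvd : qq ∣ (pol c₀ - 1) * (pol c₀ + 1) := by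
    have : (pol c₀ - 1) * (pol c₀ + 1) = pol c₀ * pol c₀ - 1 := by ring
    rw [this]
    exact dvd_of_aeval_zero A h5 h1 _ hsq
  have hprime : Prime qq := qq_irred.prime
  rcases hprime.dvd_or_dvd hdvd with h | h
  · left
    have hz : pol c₀ - 1 = 0 := by
      by_contra hne
      have := Polynomial.natDegree_le_of_dvd h hne
      rw [qq_natDegree] at this
      have h2 : (pol c₀ - 1).natDegree ≤ 3 :=
        le_trans (Polynomial.natDegree_sub_le _ _) (by simp [pol_natDegree_le])
      omega
    rw [hYeq, sub_eq_zero.mp hz, map_one]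
  · right
    have hz : pol c₀ + 1 = 0 := by
      by_contra hne
      have := Polynomial.natDegree_le_of_dvd h hne
      rw [qq_natDegree] at this
      have h2 : (pol c₀ + 1).natDegree ≤ 3 :=
        le_trans (Polynomial.natDegree_add_le _ _) (by simp [pol_natDegree_le])
      omega
    have : pol c₀ = -1 := by linear_combination hz
    rw [hYeq, this, map_neg, map_one]

/-- `GL₄(F₃)` contains no subgroup isomorphic to `A₅ × V₄`. -/
theorem stmt_10 (H : Subgroup (Matrix.GeneralLinearGroup (Fin 4) (ZMod 3))) :
    ¬ Nonempty (H ≃*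
      (alternatingGroup (Fin 5) × (Multiplicative (ZMod 2) × Multiplicative (ZMod 2)))) := by
  rintro ⟨e⟩
  have hσmem : finRotate 5 ∈ alternatingGroup (Fin 5) :=
    Equiv.Perm.finRotate_bit1_mem_alternatingGroup (n := 2)
  set σ : alternatingGroup (Fin 5) := ⟨finRotate 5, hσmem⟩ with hσ
  have hσ5 : σ ^ 5 = 1 := by
    ext : 1
    show (finRotate 5) ^ 5 = 1
    decide
  have hσ1 : σ ≠ 1 := by
    intro h
    have : finRotate 5 = 1 := congrArg Subtype.val h
    revert this; decide
  set t : Multiplicative (ZMod 2) := Multiplicative.ofAdd 1 with ht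
  have ht2 : t * t = 1 := by decide
  have ht1 : t ≠ 1 := by decide
  set g : H := e.symm (σ, 1) with hg
  set u : H := e.symm (1, (t, 1)) with hu
  set w : H := e.symm (1, (1, t)) with hw
  have hp5 : ((σ, (1 : Multiplicative (ZMod 2) × Multiplicative (ZMod 2)))) ^ 5 = 1 := by
    rw [Prod.pow_mk, hσ5, one_pow]
    rfl
  have hg5 : g ^ 5 = 1 := by
    rw [hg, ← map_pow, hp5, map_one]
  have hg1 : g ≠ 1 := by
    intro h
    rw [hg, ← map_one e.symm] at h
    have := e.symm.injective h
    exact hσ1 (congrArg Prod.fst this)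
  have hu2 : u * u = 1 := by
    rw [hu, ← map_mul, ← map_one e.symm]
    congr 1
    simp [Prod.ext_iff, ht2]
  have hw2 : w * w = 1 := by
    rw [hw, ← map_mul, ← map_one e.symm]
    congr 1
    simp [Prod.ext_iff, ht2]
  have hu1 : u ≠ 1 := by
    intro h
    rw [hu, ← map_one e.symm] at h
    have := e.symm.injective h
    have h2 := congrArg Prod.snd this
    exact ht1 (congrArg Prod.fst h2)
  have hw1 : w ≠ 1 := by
    intro h
    rw [hw, ← map_one e.symm] at h
    have := e.symm.injective h
    have h2 := congrArg Prod.snd this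
    exact ht1 (congrArg Prod.snd h2)
  have huw : u ≠ w := by
    intro h
    rw [hu, hw] at h
    have := e.symm.injective h
    have h2 := congrArg Prod.snd this
    exact ht1 (congrArg Prod.fst h2)
  have hug : u * g = g * u := by
    rw [hu, hg, ← map_mul, ← map_mul]
    congr 1
  have hwg : w * g = g * w := by
    rw [hw, hg, ← map_mul, ← map_mul]
    congr 1
  -- pass to matrices
  set A : MM := ((g : Matrix.GeneralLinearGroup (Fin 4) (ZMod 3)) : MM) with hA
  set U : MM := ((u : Matrix.GeneralLinearGroup (Fin 4) (ZMod 3)) : MM) with hU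
  set W : MM := ((w : Matrix.GeneralLinearGroup (Fin 4) (ZMod 3)) : MM) with hWW
  have hA5 : A ^ 5 = 1 := by
    rw [hA, ← Units.val_pow_eq_pow_val, ← SubmonoidClass.coe_pow, hg5]
    rfl
  have hA1 : A ≠ 1 := by
    intro h
    apply hg1
    have h1 : (g : Matrix.GeneralLinearGroup (Fin 4) (ZMod 3)) = 1 := Units.ext h
    exact Subtype.ext h1
  have coe_mul : ∀ x y : H,
      ((↑(x * y) : Matrix.GeneralLinearGroup (Fin 4) (ZMod 3)) : MM)
      = ((x : Matrix.GeneralLinearGroup (Fin 4) (ZMod 3)) : MM)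
        * ((y : Matrix.GeneralLinearGroup (Fin 4) (ZMod 3)) : MM) := by
    intro x y; rfl
  have hUA : U * A = A * U := by
    rw [hU, hA, ← coe_mul, ← coe_mul, hug]
  have hWA : W * A = A * W := by
    rw [hWW, hA, ← coe_mul, ← coe_mul, hwg]
  have hUU : U * U = 1 := by
    rw [hU, ← coe_mul, hu2]; rfl
  have hWW2 : W * W = 1 := by
    rw [hWW, ← coe_mul, hw2]; rfl
  have hU1 : U ≠ 1 := by
    intro h
    exact hu1 (Subtype.ext (Units.ext h))
  have hW1 : W ≠ 1 := by
    intro h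
    exact hw1 (Subtype.ext (Units.ext h))
  have hUW : U ≠ W := fun h => huw (Subtype.ext (Units.ext h))
  rcases main_matrix A U hA5 hA1 hUA hUU with h | h
  · exact hU1 h
  · rcases main_matrix A W hA5 hA1 hWA hWW2 with h' | h'
    · exact hW1 h'
    · exact hUW (h.trans h'.symm)
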